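/- For every nonnegative integer n, the number of paths of length 2n that never return to the x-axis after the first step (i.e., sequences of 2n steps, each +1 or −1, such that for every index k with 1 ≤ k ≤ 2n the partial sum of the first k steps is nonzero) equals B_n, the n-th central binomial coefficient. -/

import Mathlib

/-- A path of length `l` is a sequence of `l` steps, each `+1` (up, `true`) or `-1`
(down, `false`). `psum p k` is the partial sum of the first `k` steps of `p`
(the height of the path after `k` steps). -/
def psum {l : ℕ} (p : Fin l → Bool) (k : ℕ) : ℤ :=
  ∑ i ∈ Finset.univ.filter (fun i : Fin l => (i : ℕ) < k), (if p i then (1 : ℤ) else -1)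

/-- A path is even-zeroed if every index at which its partial sum is `0`
(i.e., every `x`-intercept) is divisible by `4`. -/
def IsEvenZeroed {l : ℕ} (p : Fin l → Bool) : Prop :=
  ∀ k ≤ l, psum p k = 0 → 4 ∣ k

/-- A path of length `2m` is balanced if its total sum of steps is `0`
(equivalently, it has `m` up-steps and `m` down-steps). -/
def IsBalanced {l : ℕ} (p : Fin l → Bool) : Prop :=
  psum p l = 0

def stp (b : Bool) : ℤ := if b then 1 else -1

lemma psum_zero {l : ℕ} (p : Fin l → Bool) : psum p 0 = 0 := by
  simp [psum]

lemma psum_succ {m : ℕ} (p : Fin (m+1) → Bool) (k : ℕ) :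
    psum p (k+1) = stp (p 0) + psum (Fin.tail p) k := by
  unfold psum
  rw [Finset.sum_filter, Finset.sum_filter, Fin.sum_univ_succ]
  simp [Fin.tail, stp, Nat.succ_lt_succ_iff]
  congr

def ok : (m : ℕ) → ℤ → (Fin m → Bool) → Prop
  | 0, _, _ => True
  | m+1, a, p => (a + stp (p 0) ≠ 0) ∧ ok m (a + stp (p 0)) (Fin.tail p)

lemma ok_succ {m : ℕ} (a : ℤ) (p : Fin (m+1) → Bool) :
    ok (m+1) a p ↔ (a + stp (p 0) ≠ 0) ∧ ok m (a + stp (p 0)) (Fin.tail p) := Iff.rfl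

lemma ok_iff (m : ℕ) : ∀ (a : ℤ) (p : Fin m → Bool),
    ok m a p ↔ ∀ k, 1 ≤ k → k ≤ m → a + psum p k ≠ 0 := by
  induction m with
  | zero =>
    intro a p
    constructor
    · intro _ k h1 h2; omega
    · intro _; trivial
  | succ m ih =>
    intro a p
    rw [ok_succ, ih]
    constructor
    · rintro ⟨h1, h2⟩ k hk1 hk2
      match k with
      | 1 =>
        have e : psum p 1 = stp (p 0) := by
          have := psum_succ p 0
          simpa [psum_zero] using this
        rw [e]; exact h1
      | (j+2) =>
        have := h2 (j+1) (by omega) (by omega)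
        rw [psum_succ, ← add_assoc]
        exact this
    · intro h
      refine ⟨?_, ?_⟩
      · have := h 1 (by omega) (by omega)
        have e : psum p 1 = stp (p 0) := by
          have := psum_succ p 0
          simpa [psum_zero] using this
        rwa [e] at this
      · intro k hk1 hk2
        have := h (k+1) (by omega) (by omega)
        rwa [psum_succ, ← add_assoc] at this


def cnt : ℕ → ℤ → ℕ
  | 0, _ => 1
  | m+1, a => (if a + 1 = 0 then 0 else cnt m (a+1)) + (if a - 1 = 0 then 0 else cnt m (a-1))

lemma ncard_and {α : Type*} [Finite α] (C : Prop) [Decidable C] (D : α → Prop) :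
    Nat.card {q : α // C ∧ D q} = if C then Nat.card {q : α // D q} else 0 := by
  by_cases h : C
  · rw [if_pos h]
    exact Nat.card_congr (Equiv.subtypeEquivRight (fun q => by tauto))
  · rw [if_neg h]
    haveI : IsEmpty {q : α // C ∧ D q} := ⟨fun x => h x.2.1⟩
    exact Nat.card_of_isEmpty

lemma ncard_sigma_bool (β : Bool → Type*) [∀ b, Finite (β b)] :
    Nat.card (Σ b, β b) = Nat.card (β true) + Nat.card (β false) := by
  rw [← Nat.card_sum]
  refine Nat.card_congr ⟨fun x => match x with | ⟨true, y⟩ => .inl y | ⟨false, y⟩ => .inr y,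
    fun s => match s with | .inl y => ⟨true, y⟩ | .inr y => ⟨false, y⟩, ?_, ?_⟩
  · rintro ⟨(_|_), y⟩ <;> rfl
  · rintro (y|y) <;> rfl

lemma card_ok (m : ℕ) : ∀ (a : ℤ), Nat.card {p : Fin m → Bool // ok m a p} = cnt m a := by
  induction m with
  | zero =>
    intro a
    have e : {p : Fin 0 → Bool // ok 0 a p} ≃ (Fin 0 → Bool) :=
      Equiv.subtypeUnivEquiv fun _ => trivial
    rw [Nat.card_congr e]
    simp [cnt, Nat.card_eq_fintype_card]
  | succ m ih =>
    intro a
    have e : {p : Fin (m+1) → Bool // ok (m+1) a p} ≃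
        Σ b : Bool, {q : Fin m → Bool // (a + stp b ≠ 0) ∧ ok m (a + stp b) q} :=
      { toFun := fun x => ⟨x.1 0, ⟨Fin.tail x.1, x.2⟩⟩
        invFun := fun y => ⟨Fin.cons y.1 y.2.1, by
          have h := y.2.2
          show (a + stp ((Fin.cons y.1 y.2.1 : Fin (m+1) → Bool) 0) ≠ 0) ∧ _
          rw [Fin.cons_zero, Fin.tail_cons]
          exact h⟩
        left_inv := fun x => by
          apply Subtype.ext
          exact Fin.cons_self_tail x.1
        right_inv := fun y => by
          apply Sigma.ext
          · simp
          · simp [Fin.cons_zero, Fin.tail_cons]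
            rfl }
    rw [Nat.card_congr e, ncard_sigma_bool, ncard_and, ncard_and, ih, ih]
    show (if a + 1 ≠ 0 then cnt m (a+1) else 0) + (if a + -1 ≠ 0 then cnt m (a + -1) else 0) = cnt (m+1) a
    simp only [cnt]
    by_cases h1 : a + 1 = 0 <;> by_cases h2 : a - 1 = 0 <;>
      simp [h1, h2, sub_eq_add_neg] <;> omega


lemma cnt_neg (m : ℕ) : ∀ a : ℤ, cnt m (-a) = cnt m a := by
  induction m with
  | zero => intro a; rfl
  | succ m ih =>
    intro a
    show (if -a + 1 = 0 then 0 else cnt m (-a+1)) + (if -a - 1 = 0 then 0 else cnt m (-a-1)) = _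
    have e1 : -a + 1 = -(a-1) := by ring
    have e2 : -a - 1 = -(a+1) := by ring
    rw [e1, e2]
    simp only [neg_eq_zero, ih]
    show _ = (if a + 1 = 0 then 0 else cnt m (a+1)) + (if a - 1 = 0 then 0 else cnt m (a-1))
    exact add_comm _ _

def S (m : ℕ) (a : ℤ) : ℕ :=
  ∑ k ∈ Finset.range (m+1),
    if (-a < 2*(k:ℤ) - m ∧ 2*(k:ℤ) - m ≤ a) then Nat.choose m k else 0

lemma S_zero (m : ℕ) : S m 0 = 0 := by
  apply Finset.sum_eq_zero
  intro k _
  rw [if_neg]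
  omega

lemma S_succ (m : ℕ) (a : ℤ) (ha : 1 ≤ a) : S (m+1) a = S m (a+1) + S m (a-1) := by
  unfold S
  rw [Finset.sum_range_succ']
  have h1 : ∀ j ∈ Finset.range (m+1),
      (if (-a < 2*((j+1:ℕ):ℤ) - ((m+1:ℕ):ℤ) ∧ 2*((j+1:ℕ):ℤ) - ((m+1:ℕ):ℤ) ≤ a)
          then Nat.choose (m+1) (j+1) else 0)
      = ((if (-a < 2*((j+1:ℕ):ℤ) - ((m+1:ℕ):ℤ) ∧ 2*((j+1:ℕ):ℤ) - ((m+1:ℕ):ℤ) ≤ a)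
          then Nat.choose m j else 0)
        + (if (-a < 2*((j+1:ℕ):ℤ) - ((m+1:ℕ):ℤ) ∧ 2*((j+1:ℕ):ℤ) - ((m+1:ℕ):ℤ) ≤ a)
          then Nat.choose m (j+1) else 0)) := by
    intro j _
    rw [Nat.choose_succ_succ]
    split_ifs <;> simp
  rw [Finset.sum_congr rfl h1, Finset.sum_add_distrib, add_assoc]
  -- combine second sum with the k = 0 term
  set g : ℕ → ℕ := fun k =>
    (if (-a < 2*(k:ℤ) - ((m+1:ℕ):ℤ) ∧ 2*(k:ℤ) - ((m+1:ℕ):ℤ) ≤ a) then Nat.choose m k else 0)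
    with hgdef
  have h2 : (∑ j ∈ Finset.range (m+1),
      (if (-a < 2*((j+1:ℕ):ℤ) - ((m+1:ℕ):ℤ) ∧ 2*((j+1:ℕ):ℤ) - ((m+1:ℕ):ℤ) ≤ a)
          then Nat.choose m (j+1) else 0))
      + (if (-a < 2*((0:ℕ):ℤ) - ((m+1:ℕ):ℤ) ∧ 2*((0:ℕ):ℤ) - ((m+1:ℕ):ℤ) ≤ a)
          then Nat.choose (m+1) 0 else 0)
      = ∑ k ∈ Finset.range (m+1), g k := by
    have : (∑ j ∈ Finset.range (m+1), g (j+1)) + g 0 = ∑ k ∈ Finset.range (m+2), g k :=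
      (Finset.sum_range_succ' g (m+1)).symm
    rw [show (Nat.choose (m+1) 0) = Nat.choose m 0 by simp]
    rw [this, Finset.sum_range_succ]
    simp [hgdef, Nat.choose_succ_self]
  rw [h2]
  rw [← Finset.sum_add_distrib, ← Finset.sum_add_distrib]
  apply Finset.sum_congr rfl
  intro k hk
  simp only [hgdef]
  split_ifs <;> push_cast at * <;> omega


lemma cnt_eq_S (m : ℕ) : ∀ a : ℤ, 1 ≤ a → cnt m a = S m a := by
  induction m with
  | zero =>
    intro a ha
    show 1 = S 0 a
    unfold S
    rw [Finset.sum_range_one, if_pos]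
    · simp
    · constructor <;> [skip; skip] <;> push_cast <;> omega
  | succ m ih =>
    intro a ha
    show (if a+1 = 0 then 0 else cnt m (a+1)) + (if a-1 = 0 then 0 else cnt m (a-1)) = S (m+1) a
    rw [S_succ m a ha, if_neg (by omega : ¬ a+1 = 0)]
    by_cases h : a = 1
    · subst h
      rw [if_pos (by norm_num), ih (1+1) (by norm_num)]
      norm_num [S_zero]
    · rw [if_neg (by omega), ih (a+1) (by omega), ih (a-1) (by omega)]

lemma S_one (n : ℕ) : S (2*n+1) 1 = Nat.choose (2*n+1) (n+1) := by
  unfold S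
  rw [Finset.sum_eq_single (n+1)]
  · rw [if_pos]
    constructor <;> push_cast <;> omega
  · intro k _ hne
    rw [if_neg]
    push_cast
    omega
  · intro h
    exact absurd (Finset.mem_range.mpr (by omega)) h

/-- For every nonnegative integer `n`, the number of paths of length `2n` that never
return to the `x`-axis after the first step (the partial sum of the first `k` steps is
nonzero for every `1 ≤ k ≤ 2n`) equals `B_n`, the `n`-th central binomial coefficient. -/
theorem card_never_return (n : ℕ) :
    Nat.card {p : Fin (2 * n) → Bool // ∀ k, 1 ≤ k → k ≤ 2 * n → psum p k ≠ 0} =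
      Nat.centralBinom n := by
  have h0 : Nat.card {p : Fin (2 * n) → Bool // ∀ k, 1 ≤ k → k ≤ 2 * n → psum p k ≠ 0}
      = cnt (2*n) 0 := by
    rw [← card_ok]
    apply Nat.card_congr (Equiv.subtypeEquivRight ?_)
    intro p
    rw [ok_iff]
    simp
  rw [h0]
  cases n with
  | zero => simp [cnt, Nat.centralBinom]
  | succ n =>
    have e : 2*(n+1) = (2*n+1)+1 := by ring
    rw [e]
    show (if (0:ℤ)+1 = 0 then 0 else cnt (2*n+1) (0+1))
        + (if (0:ℤ)-1 = 0 then 0 else cnt (2*n+1) (0-1)) = _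
    rw [if_neg (by norm_num), if_neg (by norm_num)]
    have h1 : (0:ℤ) + 1 = 1 := by norm_num
    have h2 : (0:ℤ) - 1 = -1 := by norm_num
    rw [h1, h2, cnt_neg, cnt_eq_S _ 1 le_rfl, S_one]
    have hsymm : Nat.choose (2*n+1) n = Nat.choose (2*n+1) (n+1) := by
      have h := Nat.choose_symm (n := 2*n+1) (k := n+1) (by omega)
      simpa [show 2*n+1 - (n+1) = n by omega] using h
    have hc : (n+1).centralBinom = Nat.choose (2*n+1) n + Nat.choose (2*n+1) (n+1) := by
      unfold Nat.centralBinom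
      rw [show 2*(n+1) = (2*n+1)+1 by ring, show (n+1) = n+1 from rfl]
      exact Nat.choose_succ_succ (2*n+1) n
    rw [hc, hsymm]
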